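/- Let V and W be varieties of Ω-algebras of the same type without nullary operation symbols. If not every algebra in W contains an idempotent element, then the variety H(V ∘ W) generated by the Mal'tsev product V ∘ W does not depend on V and coincides with the variety of all Ω-algebras of that type. -/

import Mathlib

structure Signature where
  symbols : Type
  arity : symbols → ℕ

structure Alg (S : Signature) where
  carrier : Type
  op : ∀ ω : S.symbols, (Fin (S.arity ω) → carrier) → carrier
  nonempty : Nonempty carrier

inductive Term (S : Signature) (X : Type) : Type
  | var : X → Term S X
  | app : ∀ ω : S.symbols, (Fin (S.arity ω) → Term S X) → Term S X

def Term.eval {S : Signature} {X : Type} (A : Alg S) (env : X → A.carrier) :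
    Term S X → A.carrier
  | .var x => env x
  | .app ω ts => A.op ω fun i => (ts i).eval A env

/-- The algebra `A` satisfies the identity `u = v`. -/
def Alg.sat {S : Signature} (A : Alg S) {X : Type} (u v : Term S X) : Prop :=
  ∀ env : X → A.carrier, u.eval A env = v.eval A env

/-- An identity: a pair of terms in the countably many variables `x₀, x₁, …`. -/
abbrev Ident (S : Signature) := Term S ℕ × Term S ℕ

/-- `A` lies in the variety axiomatized by the set of identities `E`. -/
def Alg.Models {S : Signature} (A : Alg S) (E : Set (Ident S)) : Prop :=
  ∀ e ∈ E, A.sat e.1 e.2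

/-- The identity `u = v` holds in the variety axiomatized by `E`. -/
def Conseq {S : Signature} (E : Set (Ident S)) {X : Type} (u v : Term S X) : Prop :=
  ∀ A : Alg S, A.Models E → A.sat u v

/-- `a` is an idempotent element of `A`. -/
def Alg.IsIdem {S : Signature} (A : Alg S) (a : A.carrier) : Prop :=
  ∀ ω : S.symbols, A.op ω (fun _ => a) = a

/-- `B` is (the universe of) a subalgebra of `A`. -/
def Alg.IsSubuniverse {S : Signature} (A : Alg S) (B : Set A.carrier) : Prop :=
  ∀ ω (a : Fin (S.arity ω) → A.carrier), (∀ i, a i ∈ B) → A.op ω a ∈ B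

/-- The subalgebra of `A` on a nonempty subuniverse `B`. -/
def Alg.subAlg {S : Signature} (A : Alg S) (B : Set A.carrier)
    (h : A.IsSubuniverse B) (hne : B.Nonempty) : Alg S where
  carrier := B
  op ω a := ⟨A.op ω fun i => (a i : A.carrier), h ω _ fun i => (a i).2⟩
  nonempty := hne.to_subtype

/-- A congruence of `A`: an equivalence relation compatible with all operations. -/
structure Congruence {S : Signature} (A : Alg S) where
  rel : A.carrier → A.carrier → Prop
  iseqv : Equivalence rel
  compat : ∀ ω (a b : Fin (S.arity ω) → A.carrier),
    (∀ i, rel (a i) (b i)) → rel (A.op ω a) (A.op ω b)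

def Congruence.setoid {S : Signature} {A : Alg S} (θ : Congruence A) :
    Setoid A.carrier := ⟨θ.rel, θ.iseqv⟩

/-- The quotient algebra `A/θ`. -/
noncomputable def Alg.quot {S : Signature} (A : Alg S) (θ : Congruence A) : Alg S where
  carrier := Quotient θ.setoid
  op ω q := Quotient.mk θ.setoid (A.op ω fun i => (q i).out)
  nonempty := A.nonempty.map (Quotient.mk θ.setoid)

/-- Membership in the Mal'tsev product of the varieties axiomatized by `V` and `W`:
`A` has a congruence `θ` with `A/θ` in (the variety of) `W` such that every
`θ`-class which is a subalgebra of `A` is an algebra in (the variety of) `V`. -/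
def InMaltsev {S : Signature} (V W : Set (Ident S)) (A : Alg S) : Prop :=
  ∃ θ : Congruence A, (A.quot θ).Models W ∧
    ∀ a : A.carrier, ∀ h : A.IsSubuniverse {b | θ.rel a b},
      (A.subAlg {b | θ.rel a b} h ⟨a, θ.iseqv.refl a⟩).Models V

/-- A class of algebras is a variety iff it is axiomatized by some set of identities. -/
def IsVarietyClass {S : Signature} (K : Alg S → Prop) : Prop :=
  ∃ E : Set (Ident S), ∀ A : Alg S, K A ↔ A.Models E

/-- Product of two algebras. -/
def prodAlg {S : Signature} (A B : Alg S) : Alg S where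
  carrier := A.carrier × B.carrier
  op ω a := (A.op ω fun i => (a i).1, B.op ω fun i => (a i).2)
  nonempty := A.nonempty.elim fun a => B.nonempty.elim fun b => ⟨(a, b)⟩

lemma prod_eval_fst {S : Signature} (A B : Alg S) {X : Type}
    (t : Term S X) (env : X → (prodAlg A B).carrier) :
    (t.eval (prodAlg A B) env).1 = t.eval A (fun x => (env x).1) := by
  induction t with
  | var x => rfl
  | app ω ts ih => exact congrArg _ (funext fun i => ih i)

lemma prod_eval_snd {S : Signature} (A B : Alg S) {X : Type}
    (t : Term S X) (env : X → (prodAlg A B).carrier) :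
    (t.eval (prodAlg A B) env).2 = t.eval B (fun x => (env x).2) := by
  induction t with
  | var x => rfl
  | app ω ts ih => exact congrArg _ (funext fun i => ih i)

/-- The kernel of the second projection, as a congruence of the product. -/
def sndCong {S : Signature} (A B : Alg S) : Congruence (prodAlg A B) where
  rel x y := x.2 = y.2
  iseqv := ⟨fun _ => rfl, Eq.symm, Eq.trans⟩
  compat ω a b h := by
    show B.op ω _ = B.op ω _
    exact congrArg _ (funext h)

/-- If not every algebra in the variety `W` contains an
idempotent element, then the variety generated by the Mal'tsev product `V ∘ W`
does not depend on `V` and coincides with the variety of all Ω-algebras: every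
algebra satisfies every identity true throughout `V ∘ W`, for every `V`. -/
theorem stmt_7 (S : Signature) (h0 : ∀ ω : S.symbols, 0 < S.arity ω)
    (W : Set (Ident S))
    (hW : ∃ B : Alg S, B.Models W ∧ ¬ ∃ b : B.carrier, B.IsIdem b) :
    ∀ (V : Set (Ident S)) (A : Alg S) (u v : Term S ℕ),
      (∀ B : Alg S, InMaltsev V W B → B.sat u v) → A.sat u v := by
  obtain ⟨B, hBW, hBnoidem⟩ := hW
  intro V A u v hVW
  set C := prodAlg A B with hC
  set θ := sndCong A B with hθ
  -- the projection from the quotient to B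
  let π : Quotient θ.setoid → B.carrier := Quotient.lift (fun c => c.2) (fun _ _ h => h)
  have hπmk : ∀ c : C.carrier, π (Quotient.mk θ.setoid c) = c.2 := fun _ => rfl
  have hπout : ∀ q : Quotient θ.setoid, (q.out).2 = π q := by
    intro q
    conv_rhs => rw [← Quotient.out_eq q]
    exact (hπmk _).symm
  have hπinj : Function.Injective π := by
    intro q1 q2 h
    induction q1 using Quotient.inductionOn
    induction q2 using Quotient.inductionOn
    exact Quotient.sound h
  have hπeval : ∀ (t : Term S ℕ) (env : ℕ → Quotient θ.setoid),
      π (t.eval (C.quot θ) env) = t.eval B (fun n => π (env n)) := by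
    intro t env
    induction t with
    | var x => rfl
    | app ω ts ih =>
      show π (Quotient.mk θ.setoid _) = _
      rw [hπmk]
      show B.op ω _ = B.op ω _
      exact congrArg _ (funext fun i => (hπout _).trans (ih i))
  have hCin : InMaltsev V W C := by
    refine ⟨θ, ?_, ?_⟩
    · intro e he env
      apply hπinj
      exact (hπeval e.1 env).trans ((hBW e he _).trans (hπeval e.2 env).symm)
    · intro a h
      exfalso
      apply hBnoidem
      refine ⟨a.2, fun ω => ?_⟩
      exact (h ω (fun _ => a) (fun _ => rfl)).symm
  have hsat := hVW C hCin
  intro env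
  obtain ⟨b0⟩ := B.nonempty
  have := hsat (fun n => (env n, b0))
  have h1 := congrArg Prod.fst this
  exact (prod_eval_fst A B u _).symm.trans (h1.trans (prod_eval_fst A B v _))
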